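/- Let C = C(o, r) be a closed spherical cap on S^{d-1} ⊂ E^d (o a unit vector, r ∈ (0, π/2)), let m be a coordinate index, and let σ_m denote the reflection of E^d negating the m-th coordinate. If the m-th coordinate of o is nonzero and the interior of C meets the coordinate greatsphere G_m = {x ∈ S^{d-1} : x_m = 0}, then the interiors of C and of the reflected cap σ_m(C) = C(σ_m(o), r) intersect. Consequently, in a packing of caps that is invariant under σ_m, every cap whose interior meets G_m has its center on G_m. -/

import Mathlib

open scoped RealInnerProductSpace

/-- Let `C(o, r)` be a closed spherical cap on `S^{d-1} ⊂ E^d` and let `σ_m`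
be the reflection negating the `m`-th coordinate. (1) If `o_m ≠ 0` and the interior of the cap
meets the coordinate greatsphere `G_m = {x ∈ S^{d-1} : x_m = 0}`, then the interiors of
`C(o, r)` and of the reflected cap `C(σ_m o, r)` intersect. (2) Consequently, in a packing of
caps invariant under `σ_m`, every cap whose interior meets `G_m` has its center on `G_m`. -/
theorem cap_offCenter_reflection_overlap {d : ℕ} (hd : 2 ≤ d) (m : Fin d) :
    (∀ (o : EuclideanSpace ℝ (Fin d)) (r : ℝ), ‖o‖ = 1 → r ∈ Set.Ioo 0 (Real.pi / 2) →
      o m ≠ 0 →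
      ({x : EuclideanSpace ℝ (Fin d) | ‖x‖ = 1 ∧ Real.cos r < ⟪x, o⟫} ∩
        {x : EuclideanSpace ℝ (Fin d) | ‖x‖ = 1 ∧ x m = 0}).Nonempty →
      ({x : EuclideanSpace ℝ (Fin d) | ‖x‖ = 1 ∧ Real.cos r < ⟪x, o⟫} ∩
        {x : EuclideanSpace ℝ (Fin d) | ‖x‖ = 1 ∧
          Real.cos r < ⟪x, o - (2 * o m) • EuclideanSpace.single m (1 : ℝ)⟫}).Nonempty) ∧
    (∀ (I : Type) (o : I → EuclideanSpace ℝ (Fin d)) (r : I → ℝ),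
      (∀ i, ‖o i‖ = 1) → (∀ i, r i ∈ Set.Ioo 0 (Real.pi / 2)) →
      (∀ i j, i ≠ j → Disjoint
        {x : EuclideanSpace ℝ (Fin d) | ‖x‖ = 1 ∧ Real.cos (r i) < ⟪x, o i⟫}
        {x : EuclideanSpace ℝ (Fin d) | ‖x‖ = 1 ∧ Real.cos (r j) < ⟪x, o j⟫}) →
      (∀ i, ∃ j, o j = o i - (2 * o i m) • EuclideanSpace.single m (1 : ℝ) ∧ r j = r i) →
      ∀ i, ({x : EuclideanSpace ℝ (Fin d) | ‖x‖ = 1 ∧ Real.cos (r i) < ⟪x, o i⟫} ∩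
          {x : EuclideanSpace ℝ (Fin d) | ‖x‖ = 1 ∧ x m = 0}).Nonempty →
        o i m = 0) := by
  have key : ∀ (x o : EuclideanSpace ℝ (Fin d)), x m = 0 →
      ⟪x, o - (2 * o m) • EuclideanSpace.single m (1 : ℝ)⟫ = ⟪x, o⟫ := by
    intro x o hx
    rw [inner_sub_right, real_inner_smul_right, EuclideanSpace.inner_single_right]
    simp [hx]
  constructor
  · rintro o r _ _ _ ⟨x, ⟨hx1, hx2⟩, ⟨_, hxm⟩⟩
    exact ⟨x, ⟨hx1, hx2⟩, ⟨hx1, by rw [key x o hxm]; exact hx2⟩⟩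
  · rintro I o r hno hr hdisj hsym i ⟨x, ⟨hx1, hx2⟩, ⟨_, hxm⟩⟩
    by_contra hom
    obtain ⟨j, hoj, hrj⟩ := hsym i
    have hij : i ≠ j := by
      rintro rfl
      have := congrArg (fun v : EuclideanSpace ℝ (Fin d) => v m) hoj
      simp [EuclideanSpace.single_apply] at this
      have : o i m = -(o i m) := by linarith [this]
      exact hom (by linarith)
    exact (hdisj i j hij).ne_of_mem ⟨hx1, hx2⟩
      ⟨hx1, by rw [hrj, hoj, key x (o i) hxm]; exact hx2⟩ rfl
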